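/- Let G be a connected Eulerian digraph and x, y chip-distributions with x ⤳ y. Then there exists a legal sequence of firings (v_1, v_2, …, v_s) transforming x into y, and indices i_0 = 0 < i_1 < i_2 < … < i_t = s, such that for each j = 1, …, t no vertex appears twice in the subsequence v_{i_{j−1}+1}, …, v_{i_j}, and setting S_j = {v_{i_{j−1}+1}, …, v_{i_j}}, we have S_1 ⊆ S_2 ⊆ … ⊆ S_t ⊊ V. -/

import Mathlib

namespace ChipFiring

variable {V : Type*}

/-- Out-degree of a vertex: total multiplicity of edges leaving `v`. -/
def outdeg [Fintype V] (d : V → V → ℕ) (v : V) : ℕ := ∑ u, d v u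

/-- In-degree of a vertex: total multiplicity of edges entering `v`. -/
def indeg [Fintype V] (d : V → V → ℕ) (v : V) : ℕ := ∑ u, d u v

/-- A digraph (multiplicity function) has no loops. -/
def Loopless (d : V → V → ℕ) : Prop := ∀ v, d v v = 0

/-- Weak connectivity: each pair of vertices is joined by an undirected walk. -/
def WeaklyConnected (d : V → V → ℕ) : Prop :=
  ∀ u v : V, Relation.ReflTransGen (fun a b => d a b ≠ 0 ∨ d b a ≠ 0) u v

/-- Strong connectivity: each ordered pair of vertices is joined by a directed walk. -/
def StronglyConnected (d : V → V → ℕ) : Prop :=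
  ∀ u v : V, Relation.ReflTransGen (fun a b => d a b ≠ 0) u v

/-- Eulerian: out-degree equals in-degree at each vertex. -/
def Eulerian [Fintype V] (d : V → V → ℕ) : Prop := ∀ v, outdeg d v = indeg d v

/-- The Laplacian matrix: `L(u,u) = -d⁺(u)`, and `L(u,v) = d(v,u)` for `u ≠ v`. -/
def laplacian [Fintype V] [DecidableEq V] (d : V → V → ℕ) : Matrix V V ℤ :=
  fun u v => if u = v then -(outdeg d v : ℤ) else (d v u : ℤ)

/-- Firing vertex `v`: `v` sends one chip along each outgoing edge. -/
def fire [Fintype V] [DecidableEq V] (d : V → V → ℕ) (x : V → ℕ) (v : V) : V → ℕ :=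
  fun u => if u = v then x v - outdeg d v else x u + d v u

/-- `LegalSeq d x α` : the sequence of firings `α` is legal from initial distribution `x`. -/
def LegalSeq [Fintype V] [DecidableEq V] (d : V → V → ℕ) : (V → ℕ) → List V → Prop
  | _, [] => True
  | x, v :: rest => outdeg d v ≤ x v ∧ LegalSeq d (fire d x v) rest

/-- The chip-distribution obtained from `x` after performing the firings `α`. -/
def runGame [Fintype V] [DecidableEq V] (d : V → V → ℕ) : (V → ℕ) → List V → (V → ℕ)
  | x, [] => x
  | x, v :: rest => runGame d (fire d x v) rest

/-- The firing vector of a game: how many times each vertex is fired. -/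
def firingVector [DecidableEq V] (α : List V) : V → ℕ := fun v => α.count v

/-- `x ⤳ y` : some legal game transforms `x` into `y`. -/
def Reaches [Fintype V] [DecidableEq V] (d : V → V → ℕ) (x y : V → ℕ) : Prop :=
  ∃ α : List V, LegalSeq d x α ∧ runGame d x α = y

/-- A period vector: a nonnegative integer vector in the kernel of the Laplacian. -/
def PeriodVector [Fintype V] [DecidableEq V] (d : V → V → ℕ) (p : V → ℕ) : Prop :=
  (laplacian d).mulVec (fun v => (p v : ℤ)) = 0

/-- A vector `f ∈ ℕ^V` is reduced if `f ≥ p` fails for every nonzero period vector `p`. -/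
def Reduced [Fintype V] [DecidableEq V] (d : V → V → ℕ) (f : V → ℕ) : Prop :=
  ∀ p : V → ℕ, PeriodVector d p → p ≠ 0 → ¬ (∀ v, p v ≤ f v)

/-- A distribution is recurrent if a nonempty legal game transforms it back to itself. -/
def Recurrent [Fintype V] [DecidableEq V] (d : V → V → ℕ) (x : V → ℕ) : Prop :=
  ∃ α : List V, α ≠ [] ∧ LegalSeq d x α ∧ runGame d x α = x

/-- Linear equivalence: `x = y + Lz` for some integer vector `z`. -/
def LinEquiv [Fintype V] [DecidableEq V] (d : V → V → ℕ) (x y : V → ℕ) : Prop :=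
  ∃ z : V → ℤ, ∀ v, (x v : ℤ) = (y v : ℤ) + (laplacian d).mulVec z v

/-- `x` is non-terminating: there is an infinite sequence of legal firings from `x`. -/
def NonTerminating [Fintype V] [DecidableEq V] (d : V → V → ℕ) (x : V → ℕ) : Prop :=
  ∃ s : ℕ → V, ∀ n : ℕ, LegalSeq d x (List.ofFn (fun i : Fin n => s i))

end ChipFiring

namespace ChipFiring

open Finset

variable {V : Type*} [Fintype V] [DecidableEq V]

lemma legalSeq_cons {d : V → V → ℕ} {x : V → ℕ} {a : V} {t : List V} :
    LegalSeq d x (a :: t) ↔ outdeg d a ≤ x a ∧ LegalSeq d (fire d x a) t := Iff.rfl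

lemma runGame_cons {d : V → V → ℕ} {x : V → ℕ} {a : V} {t : List V} :
    runGame d x (a :: t) = runGame d (fire d x a) t := rfl

lemma runGame_append (d : V → V → ℕ) :
    ∀ (α β : List V) (x : V → ℕ), runGame d x (α ++ β) = runGame d (runGame d x α) β := by
  intro α
  induction α with
  | nil => intro β x; rfl
  | cons a t ih => intro β x; simp only [List.cons_append, runGame_cons]; exact ih β _

lemma legalSeq_append {d : V → V → ℕ} :
    ∀ (α β : List V) (x : V → ℕ),
      LegalSeq d x (α ++ β) ↔ LegalSeq d x α ∧ LegalSeq d (runGame d x α) β := by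
  intro α
  induction α with
  | nil => intro β x; simp [LegalSeq, runGame]
  | cons a t ih =>
    intro β x
    simp only [List.cons_append, legalSeq_cons, runGame_cons, ih, and_assoc]

lemma fire_cast {d : V → V → ℕ} (hloop : Loopless d) {x : V → ℕ} {a : V}
    (h : outdeg d a ≤ x a) (v : V) :
    ((fire d x a v : ℤ)) = (x v : ℤ) + (d a v : ℤ) - (if v = a then (outdeg d a : ℤ) else 0) := by
  unfold fire
  by_cases hv : v = a
  · rw [hv]
    rw [if_pos rfl, if_pos rfl, Nat.cast_sub h, hloop a]
    push_cast
    ring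
  · rw [if_neg hv, if_neg hv]
    push_cast
    ring

/-- The state after a legal game, as an exact integer formula. -/
lemma runGame_cast {d : V → V → ℕ} (hloop : Loopless d) :
    ∀ (α : List V) (x : V → ℕ), LegalSeq d x α → ∀ v,
      ((runGame d x α v : ℤ))
        = (x v : ℤ) + ∑ u, (α.count u : ℤ) * (d u v : ℤ)
            - (α.count v : ℤ) * (outdeg d v : ℤ) := by
  intro α
  induction α with
  | nil => intro x _ v; simp [runGame]
  | cons a t ih =>
    intro x hleg v
    obtain ⟨h1, h2⟩ := hleg
    rw [runGame_cons, ih _ h2 v]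
    have hcnt : ∀ u : V, (((a :: t).count u : ℤ)) = (t.count u : ℤ) + (if a = u then 1 else 0) := by
      intro u
      rw [List.count_cons]
      by_cases hu : a = u <;> simp [hu]
    have hsum : ∑ u, (((a :: t).count u : ℤ)) * (d u v : ℤ)
        = (∑ u, (t.count u : ℤ) * (d u v : ℤ)) + (d a v : ℤ) := by
      simp only [hcnt, add_mul, Finset.sum_add_distrib, ite_mul, one_mul, zero_mul]
      rw [Finset.sum_ite_eq univ a (fun u => (d u v : ℤ))]
      simp
    rw [hsum, fire_cast hloop h1 v, hcnt v]
    by_cases hv : v = a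
    · subst hv; simp; ring
    · have : ¬ (a = v) := fun hh => hv hh.symm
      simp [hv, this]; ring

/-- Two legal games from the same start with the same firing counts end at the same state. -/
lemma runGame_eq_of_count_eq {d : V → V → ℕ} (hloop : Loopless d) {α β : List V} {x : V → ℕ}
    (hα : LegalSeq d x α) (hβ : LegalSeq d x β)
    (hc : ∀ v, α.count v = β.count v) :
    runGame d x α = runGame d x β := by
  funext v
  have h1 := runGame_cast hloop α x hα v
  have h2 := runGame_cast hloop β x hβ v
  have : ((runGame d x α v : ℤ)) = ((runGame d x β v : ℤ)) := by
    rw [h1, h2]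
    simp [hc]
  exact_mod_cast this

/-- Remove from `l` the first occurrence of every element not already in `s`. -/
def strip (s : Finset V) : List V → List V
  | [] => []
  | a :: l => if a ∈ s then a :: strip s l else strip (insert a s) l

lemma strip_sublist (s : Finset V) (l : List V) : (strip s l).Sublist l := by
  induction l generalizing s with
  | nil => simp [strip]
  | cons a t ih =>
    by_cases h : a ∈ s
    · simpa [strip, h] using (ih s).cons₂ a
    · simpa [strip, h] using (ih (insert a s)).cons a

lemma strip_length_lt (s : Finset V) (a : V) (l : List V) (h : a ∉ s) :
    (strip s (a :: l)).length < (a :: l).length := by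
  have : strip s (a :: l) = strip (insert a s) l := by simp [strip, h]
  rw [this]
  calc (strip (insert a s) l).length ≤ l.length := (strip_sublist _ l).length_le
    _ < (a :: l).length := by simp

lemma count_strip (s : Finset V) (l : List V) (v : V) :
    ((strip s l).count v : ℤ) = (l.count v : ℤ) - (if v ∈ l ∧ v ∉ s then 1 else 0) := by
  induction l generalizing s with
  | nil => simp [strip]
  | cons a t ih =>
    by_cases h : a ∈ s
    · rw [show strip s (a :: t) = a :: strip s t from by simp [strip, h]]
      rw [List.count_cons, List.count_cons]
      push_cast
      rw [ih s]
      by_cases hv : v = a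
      · subst hv
        simp [h]
      · have hne : ¬ (a = v) := fun hh => hv hh.symm
        by_cases hvt : v ∈ t <;> by_cases hvs : v ∈ s <;>
          simp [hne, hv, hvt, hvs, List.mem_cons]
    · rw [show strip s (a :: t) = strip (insert a s) t from by simp [strip, h]]
      rw [ih (insert a s), List.count_cons]
      by_cases hv : v = a
      · subst hv
        simp [h]
      · have hne : ¬ (a = v) := fun hh => hv hh.symm
        have hmem : v ∈ insert a s ↔ v ∈ s := by simp [Finset.mem_insert, hv]
        by_cases hvt : v ∈ t <;> by_cases hvs : v ∈ s <;>
          simp [hne, hv, hvt, hvs, hmem, List.mem_cons]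

lemma indeg_cast (d : V → V → ℕ) (v : V) : ((indeg d v : ℤ)) = ∑ u, (d u v : ℤ) := by
  unfold indeg; push_cast; rfl

lemma sum_part_le_outdeg {d : V → V → ℕ} (heul : Eulerian d) (s : Finset V) (v : V) :
    ∑ u ∈ s, (d u v : ℤ) ≤ (outdeg d v : ℤ) := by
  have h1 : ∑ u ∈ s, (d u v : ℤ) ≤ ∑ u, (d u v : ℤ) :=
    Finset.sum_le_sum_of_subset_of_nonneg (Finset.subset_univ s)
      (fun i _ _ => by positivity)
  rw [← indeg_cast, ← heul v] at h1
  exact h1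

/-- Removing the first occurrence of each "new" vertex from a legal game keeps it legal
(on an Eulerian digraph).  The vector `z'` is the appropriately shifted start state. -/
lemma strip_legal {d : V → V → ℕ} (hloop : Loopless d) (heul : Eulerian d) :
    ∀ (α : List V) (s : Finset V) (z z' : V → ℕ), LegalSeq d z α →
      (∀ v, (z' v : ℤ) = (z v : ℤ) + (if v ∈ s then (outdeg d v : ℤ) else 0)
          - ∑ u ∈ s, (d u v : ℤ)) →
      LegalSeq d z' (strip s α) := by
  intro α
  induction α with
  | nil => intro s z z' _ _; trivial
  | cons a t ih =>
    intro s z z' hleg hinv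
    obtain ⟨h1, h2⟩ := hleg
    by_cases h : a ∈ s
    · rw [show strip s (a :: t) = a :: strip s t from by simp [strip, h]]
      have hfire : outdeg d a ≤ z' a := by
        have hz : (z' a : ℤ) = (z a : ℤ) + (outdeg d a : ℤ) - ∑ u ∈ s, (d u a : ℤ) := by
          rw [hinv a, if_pos h]
        have hle : ∑ u ∈ s, (d u a : ℤ) ≤ (outdeg d a : ℤ) := sum_part_le_outdeg heul s a
        have : ((outdeg d a : ℤ)) ≤ (z' a : ℤ) := by
          have : ((outdeg d a : ℤ)) ≤ (z a : ℤ) := by exact_mod_cast h1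
          omega
        exact_mod_cast this
      refine ⟨hfire, ih s (fire d z a) (fire d z' a) h2 ?_⟩
      intro v
      rw [fire_cast hloop hfire v, fire_cast hloop h1 v, hinv v]
      ring
    · rw [show strip s (a :: t) = strip (insert a s) t from by simp [strip, h]]
      refine ih (insert a s) (fire d z a) z' h2 ?_
      intro v
      rw [fire_cast hloop h1 v, hinv v, Finset.sum_insert h]
      by_cases hv : v = a
      · subst hv
        simp [h]
        ring
      · simp [Finset.mem_insert, hv]
        ring

/-- The deduplicated list (distinct vertices in order of last occurrence) is a legal game
from the shifted end state, and ends at the same state as the original game. -/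
lemma dedup_legal {d : V → V → ℕ} (hloop : Loopless d) :
    ∀ (α : List V) (z z'' : V → ℕ), LegalSeq d z α →
      (∀ v, (z'' v : ℤ) = (runGame d z α v : ℤ)
          + (if v ∈ α.toFinset then (outdeg d v : ℤ) else 0)
          - ∑ u ∈ α.toFinset, (d u v : ℤ)) →
      LegalSeq d z'' α.dedup ∧ runGame d z'' α.dedup = runGame d z α := by
  intro α
  induction α with
  | nil =>
    intro z z'' _ hz
    have : z'' = z := by
      funext v
      have := hz v
      simp [runGame] at this
      exact_mod_cast this
    subst this
    exact ⟨trivial, rfl⟩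
  | cons a t ih =>
    intro z z'' hleg hz
    obtain ⟨h1, h2⟩ := hleg
    by_cases ha : a ∈ t
    · rw [List.dedup_cons_of_mem ha]
      have hfs : (a :: t).toFinset = t.toFinset := by
        rw [List.toFinset_cons, Finset.insert_eq_self]
        exact List.mem_toFinset.mpr ha
      exact ih (fire d z a) z'' h2 (by intro v; have := hz v; rwa [hfs, runGame_cons] at this)
    · rw [List.dedup_cons_of_notMem ha]
      have hfs : (a :: t).toFinset = insert a t.toFinset := List.toFinset_cons
      have hanot : a ∉ t.toFinset := fun hh => ha (List.mem_toFinset.mp hh)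
      set y := runGame d (fire d z a) t with hy
      -- key inequality : y a ≥ ∑_{u ∈ t.toFinset} d u a
      have hkey : ∑ u ∈ t.toFinset, (d u a : ℤ) ≤ (y a : ℤ) := by
        have hrun := runGame_cast hloop t (fire d z a) h2 a
        have hcnt0 : (t.count a : ℤ) = 0 := by
          simp [List.count_eq_zero_of_not_mem ha]
        have hbound : ∑ u ∈ t.toFinset, (d u a : ℤ)
            ≤ ∑ u, (t.count u : ℤ) * (d u a : ℤ) := by
          have h1' : ∑ u ∈ t.toFinset, (d u a : ℤ)
              ≤ ∑ u ∈ t.toFinset, (t.count u : ℤ) * (d u a : ℤ) := by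
            apply Finset.sum_le_sum
            intro i hi
            have : 1 ≤ (t.count i : ℤ) := by
              have : 0 < t.count i := List.count_pos_iff.mpr (List.mem_toFinset.mp hi)
              exact_mod_cast this
            nlinarith [Int.ofNat_nonneg (d i a)]
          have h2' : ∑ u ∈ t.toFinset, (t.count u : ℤ) * (d u a : ℤ)
              ≤ ∑ u, (t.count u : ℤ) * (d u a : ℤ) := by
            apply Finset.sum_le_sum_of_subset_of_nonneg (Finset.subset_univ _)
            intro i _ _
            positivity
          exact le_trans h1' h2'
        have hnn : (0 : ℤ) ≤ (fire d z a a : ℤ) := by positivity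
        rw [hrun, hcnt0] at *
        omega
      have hfire : outdeg d a ≤ z'' a := by
        have hza := hz a
        rw [hfs] at hza
        rw [if_pos (Finset.mem_insert_self a _), Finset.sum_insert hanot, hloop a] at hza
        have : ((outdeg d a : ℤ)) ≤ (z'' a : ℤ) := by
          rw [runGame_cons, ← hy] at hza
          push_cast at hza ⊢
          omega
        exact_mod_cast this
      have hnext := ih (fire d z a) (fire d z'' a) h2 ?_
      · refine ⟨⟨hfire, hnext.1⟩, ?_⟩
        rw [runGame_cons, runGame_cons]
        exact hnext.2
      · intro v
        rw [fire_cast hloop hfire v, hz v, hfs, Finset.sum_insert hanot, runGame_cons, ← hy]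
        by_cases hv : v = a
        · subst hv
          simp [hanot]
          ring
        · simp [Finset.mem_insert, hv]
          ring

/-- The shift identity between the end of the stripped game and the end of the original. -/
lemma strip_end_identity {d : V → V → ℕ} (hloop : Loopless d) {α : List V} {x : V → ℕ}
    (hleg : LegalSeq d x α) (hleg' : LegalSeq d x (strip ∅ α)) (v : V) :
    ((runGame d x (strip ∅ α) v : ℤ))
      = (runGame d x α v : ℤ) + (if v ∈ α.toFinset then (outdeg d v : ℤ) else 0)
        - ∑ u ∈ α.toFinset, (d u v : ℤ) := by
  have h1 := runGame_cast hloop (strip ∅ α) x hleg' v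
  have h2 := runGame_cast hloop α x hleg v
  have hc : ∀ u, ((strip ∅ α).count u : ℤ)
      = (α.count u : ℤ) - (if u ∈ α.toFinset then 1 else 0) := by
    intro u
    rw [count_strip ∅ α u]
    simp [List.mem_toFinset]
  have hsum : ∑ u, ((strip ∅ α).count u : ℤ) * (d u v : ℤ)
      = ∑ u, (α.count u : ℤ) * (d u v : ℤ) - ∑ u ∈ α.toFinset, (d u v : ℤ) := by
    simp only [hc, sub_mul, Finset.sum_sub_distrib, ite_mul, one_mul, zero_mul]
    congr 1
    rw [Finset.sum_ite_mem, Finset.univ_inter]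
  rw [h1, h2, hsum, hc v]
  by_cases hv : v ∈ α.toFinset <;> simp [hv] <;> ring

/-- Core induction: every legal game can be rearranged into ascending nodup blocks whose
vertex sets are contained in the support of the game. -/
lemma blocks_aux {d : V → V → ℕ} (hloop : Loopless d) (heul : Eulerian d) :
    ∀ (n : ℕ) (α : List V) (x : V → ℕ), α.length ≤ n → LegalSeq d x α →
      ∃ Bs : List (List V),
        LegalSeq d x Bs.flatten ∧ runGame d x Bs.flatten = runGame d x α ∧
        (∀ B ∈ Bs, B ≠ [] ∧ B.Nodup ∧ B.toFinset ⊆ α.toFinset) ∧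
        Bs.Chain' (fun A B => A.toFinset ⊆ B.toFinset) := by
  intro n
  induction n with
  | zero =>
    intro α x hlen _
    have : α = [] := List.length_eq_zero_iff.mp (Nat.le_zero.mp hlen)
    subst this
    exact ⟨[], trivial, rfl, by simp, List.isChain_nil⟩
  | succ n ih =>
    intro α x hlen hleg
    rcases α with _ | ⟨a, t⟩
    · exact ⟨[], trivial, rfl, by simp, List.isChain_nil⟩
    set α := a :: t with hα
    -- strip the first occurrences
    have hleg' : LegalSeq d x (strip ∅ α) :=
      strip_legal hloop heul α ∅ x x hleg (by intro v; simp)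
    have hlen' : (strip ∅ α).length ≤ n := by
      have := strip_length_lt ∅ a t (Finset.notMem_empty a)
      rw [← hα] at this
      omega
    obtain ⟨Bs', hBleg, hBrun, hBcond, hBchain⟩ := ih (strip ∅ α) x hlen' hleg'
    -- the final block
    have hz : ∀ v, ((runGame d x (strip ∅ α) v : ℤ))
        = (runGame d x α v : ℤ) + (if v ∈ α.toFinset then (outdeg d v : ℤ) else 0)
          - ∑ u ∈ α.toFinset, (d u v : ℤ) := strip_end_identity hloop hleg hleg'
    obtain ⟨hDleg, hDrun⟩ := dedup_legal hloop α x (runGame d x (strip ∅ α)) hleg hz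
    refine ⟨Bs' ++ [α.dedup], ?_, ?_, ?_, ?_⟩
    · rw [List.flatten_append]
      rw [legalSeq_append]
      refine ⟨hBleg, ?_⟩
      simp only [List.flatten, List.append_nil, List.append_eq]
      rw [hBrun]
      exact hDleg
    · rw [List.flatten_append, runGame_append]
      simp only [List.flatten, List.append_nil, List.append_eq]
      rw [hBrun]
      exact hDrun
    · intro B hB
      rcases List.mem_append.mp hB with hB | hB
      · obtain ⟨h1, h2, h3⟩ := hBcond B hB
        refine ⟨h1, h2,.trans h3 ?_⟩
        intro u hu
        have := (strip_sublist ∅ α).subset (List.mem_toFinset.mp hu)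
        exact List.mem_toFinset.mpr this
      · have : B = α.dedup := by simpa using hB
        subst this
        refine ⟨?_, List.nodup_dedup α, ?_⟩
        · rw [ne_eq, List.dedup_eq_nil]
          simp [hα]
        · intro u hu
          exact List.mem_toFinset.mpr (List.mem_dedup.mp (List.mem_toFinset.mp hu))
    · change List.IsChain _ _
      rw [List.isChain_append]
      refine ⟨hBchain, List.isChain_singleton _, ?_⟩
      intro A hA B hB
      have hAmem : A ∈ Bs' := by
        obtain ⟨h, rfl⟩ := List.mem_getLast?_eq_getLast hA
        exact List.getLast_mem h
      have hBeq : α.dedup = B := by simpa using hB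
      subst hBeq
      obtain ⟨_, _, h3⟩ := hBcond A hAmem
      intro u hu
      have h4 := h3 hu
      have h5 : u ∈ strip ∅ α := List.mem_toFinset.mp h4
      have h6 : u ∈ α := (strip_sublist ∅ α).subset h5
      exact List.mem_toFinset.mpr (List.mem_dedup.mpr h6)

/-- Reduction: on an Eulerian digraph any legal game can be replaced by one (with the same
endpoints) in which some vertex never fires. -/
lemma reduce_support {d : V → V → ℕ} (hloop : Loopless d) (heul : Eulerian d) [Nonempty V] :
    ∀ (n : ℕ) (α : List V) (x : V → ℕ), α.length ≤ n → LegalSeq d x α →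
      ∃ β : List V, LegalSeq d x β ∧ runGame d x β = runGame d x α ∧
        β.toFinset ⊂ Finset.univ := by
  intro n
  induction n with
  | zero =>
    intro α x hlen _
    have : α = [] := List.length_eq_zero_iff.mp (Nat.le_zero.mp hlen)
    subst this
    refine ⟨[], trivial, rfl, ?_⟩
    simp only [List.toFinset_nil]
    exact Finset.empty_ssubset.mpr Finset.univ_nonempty
  | succ n ih =>
    intro α x hlen hleg
    by_cases hss : α.toFinset = Finset.univ
    · -- strip and recurse
      rcases α with _ | ⟨a, t⟩
      · exfalso
        simp only [List.toFinset_nil] at hss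
        exact Finset.univ_nonempty.ne_empty hss.symm
      set α := a :: t with hα
      have hleg' : LegalSeq d x (strip ∅ α) :=
        strip_legal hloop heul α ∅ x x hleg (by intro v; simp)
      have hlen' : (strip ∅ α).length ≤ n := by
        have := strip_length_lt ∅ a t (Finset.notMem_empty a)
        rw [← hα] at this
        omega
      obtain ⟨β, h1, h2, h3⟩ := ih (strip ∅ α) x hlen' hleg'
      refine ⟨β, h1, ?_, h3⟩
      rw [h2]
      -- runGame d x (strip ∅ α) = runGame d x α  since the support is everything
      funext v
      have hz := strip_end_identity hloop hleg hleg' v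
      rw [hss] at hz
      have hsum : ∑ u ∈ (Finset.univ : Finset V), (d u v : ℤ) = (outdeg d v : ℤ) := by
        rw [← indeg_cast, ← heul v]
      rw [if_pos (Finset.mem_univ v), hsum] at hz
      have : ((runGame d x (strip ∅ α) v : ℤ)) = ((runGame d x α v : ℤ)) := by
        rw [hz]; ring
      exact_mod_cast this
    · exact ⟨α, hleg, rfl, lt_of_le_of_ne (Finset.subset_univ _) hss⟩

end ChipFiring

namespace ChipFiring

/-- On a connected Eulerian digraph, if `x ⤳ y`, then `y` can be reached
from `x` by a legal game that is a concatenation of consecutive blocks `B_1, …, B_t`, where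
no vertex appears twice in a block and the vertex sets of the blocks form an ascending
chain `S_1 ⊆ S_2 ⊆ … ⊆ S_t ⊊ V`. -/
theorem reaches_by_ascending_chain {V : Type*} [Fintype V] [DecidableEq V]
    (d : V → V → ℕ) (hloop : Loopless d) (hconn : WeaklyConnected d) (heul : Eulerian d)
    (x y : V → ℕ) (h : Reaches d x y) :
    ∃ Bs : List (List V),
      LegalSeq d x Bs.flatten ∧ runGame d x Bs.flatten = y ∧
      (∀ B ∈ Bs, B ≠ [] ∧ B.Nodup ∧ B.toFinset ⊂ Finset.univ) ∧
      Bs.Chain' (fun A B => A.toFinset ⊆ B.toFinset) := by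
  rcases h with ⟨α, hleg, hrun⟩
  cases isEmpty_or_nonempty V with
  | inl hV =>
    refine ⟨[], trivial, ?_, by simp, List.isChain_nil⟩
    rw [← hrun]
    exact funext fun v => (hV.false v).elim
  | inr hV =>
    obtain ⟨β, h1, h2, h3⟩ :=
      reduce_support hloop heul α.length α x le_rfl hleg
    obtain ⟨Bs, hb1, hb2, hb3, hb4⟩ :=
      blocks_aux hloop heul β.length β x le_rfl h1
    refine ⟨Bs, hb1, ?_, ?_, hb4⟩
    · rw [hb2, h2, hrun]
    · intro B hB
      obtain ⟨c1, c2, c3⟩ := hb3 B hB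
      exact ⟨c1, c2, lt_of_le_of_lt c3 h3⟩


end ChipFiring
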